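/- Let μ_1, ..., μ_k and μ̃_1, ..., μ̃_k be points in R^d. The two Gaussian-mixture posteriors φ and φ̃ (softmax of negative half squared distances) are equal as functions on R^d if and only if there exists v ∈ R^d such that μ̃_i = μ_i - v for all i, and ||μ_i||^2 - ||μ̃_i||^2 is the same constant for all i. -/

import Mathlib

theorem posterior_eq_iff_shift {d k : ℕ}
    (μ μt : Fin k → EuclideanSpace ℝ (Fin d)) :
    (∀ x : EuclideanSpace ℝ (Fin d), ∀ i : Fin k,
        Real.exp (-‖x - μ i‖ ^ 2 / 2) / (∑ j, Real.exp (-‖x - μ j‖ ^ 2 / 2)) =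
        Real.exp (-‖x - μt i‖ ^ 2 / 2) / (∑ j, Real.exp (-‖x - μt j‖ ^ 2 / 2)))
      ↔
    ∃ v : EuclideanSpace ℝ (Fin d), (∀ i, μt i = μ i - v) ∧
      ∃ C : ℝ, ∀ i, ‖μ i‖ ^ 2 - ‖μt i‖ ^ 2 = C := by
  constructor
  · intro h
    rcases Nat.eq_zero_or_pos k with hk | hk
    · subst hk
      exact ⟨0, fun i => i.elim0, 0, fun i => i.elim0⟩
    · have i0 : Fin k := ⟨0, hk⟩
      -- key: the difference of squared distances is independent of i
      have key : ∀ x : EuclideanSpace ℝ (Fin d), ∀ i : Fin k,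
          ‖x - μt i‖ ^ 2 - ‖x - μ i‖ ^ 2 = ‖x - μt i0‖ ^ 2 - ‖x - μ i0‖ ^ 2 := by
        intro x i
        have hS : 0 < ∑ j, Real.exp (-‖x - μ j‖ ^ 2 / 2) :=
          Finset.sum_pos (fun j _ => Real.exp_pos _) ⟨i0, Finset.mem_univ _⟩
        have hS' : 0 < ∑ j, Real.exp (-‖x - μt j‖ ^ 2 / 2) :=
          Finset.sum_pos (fun j _ => Real.exp_pos _) ⟨i0, Finset.mem_univ _⟩
        have h1 := (div_eq_div_iff hS.ne' hS'.ne').mp (h x i)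
        have h2 := (div_eq_div_iff hS.ne' hS'.ne').mp (h x i0)
        have hmul : Real.exp (-‖x - μ i‖ ^ 2 / 2) * Real.exp (-‖x - μt i0‖ ^ 2 / 2)
            * ((∑ j, Real.exp (-‖x - μ j‖ ^ 2 / 2)) * (∑ j, Real.exp (-‖x - μt j‖ ^ 2 / 2)))
            = Real.exp (-‖x - μt i‖ ^ 2 / 2) * Real.exp (-‖x - μ i0‖ ^ 2 / 2)
            * ((∑ j, Real.exp (-‖x - μ j‖ ^ 2 / 2)) * (∑ j, Real.exp (-‖x - μt j‖ ^ 2 / 2))) := by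
          have h3 := congrArg₂ (· * ·) h1 h2.symm
          linear_combination h3
        have hexp : Real.exp (-‖x - μ i‖ ^ 2 / 2) * Real.exp (-‖x - μt i0‖ ^ 2 / 2)
            = Real.exp (-‖x - μt i‖ ^ 2 / 2) * Real.exp (-‖x - μ i0‖ ^ 2 / 2) := by
          have := mul_right_cancel₀ (mul_pos hS hS').ne' hmul
          exact this
        rw [← Real.exp_add, ← Real.exp_add] at hexp
        have := Real.exp_injective hexp
        linarith
      -- evaluate at 0 to get the norm constant
      have hC : ∀ i : Fin k, ‖μ i‖ ^ 2 - ‖μt i‖ ^ 2 = ‖μ i0‖ ^ 2 - ‖μt i0‖ ^ 2 := by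
        intro i
        have := key 0 i
        simp only [zero_sub, norm_neg] at this
        linarith
      -- get the shift vector
      refine ⟨μ i0 - μt i0, ?_, ‖μ i0‖ ^ 2 - ‖μt i0‖ ^ 2, hC⟩
      intro i
      have hv : ∀ x : EuclideanSpace ℝ (Fin d),
          inner ℝ x ((μ i - μt i) - (μ i0 - μt i0)) = (0 : ℝ) := by
        intro x
        have hk1 := key x i
        have e1 : ‖x - μt i‖ ^ 2 = ‖x‖ ^ 2 - 2 * inner ℝ x (μt i) + ‖μt i‖ ^ 2 :=
          norm_sub_sq_real x (μt i)
        have e2 : ‖x - μ i‖ ^ 2 = ‖x‖ ^ 2 - 2 * inner ℝ x (μ i) + ‖μ i‖ ^ 2 :=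
          norm_sub_sq_real x (μ i)
        have e3 : ‖x - μt i0‖ ^ 2 = ‖x‖ ^ 2 - 2 * inner ℝ x (μt i0) + ‖μt i0‖ ^ 2 :=
          norm_sub_sq_real x (μt i0)
        have e4 : ‖x - μ i0‖ ^ 2 = ‖x‖ ^ 2 - 2 * inner ℝ x (μ i0) + ‖μ i0‖ ^ 2 :=
          norm_sub_sq_real x (μ i0)
        have hCi := hC i
        have expand : (inner ℝ x ((μ i - μt i) - (μ i0 - μt i0)) : ℝ)
            = ((inner ℝ x (μ i) : ℝ) - (inner ℝ x (μt i) : ℝ))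
              - ((inner ℝ x (μ i0) : ℝ) - (inner ℝ x (μt i0) : ℝ)) := by
          rw [inner_sub_right, inner_sub_right, inner_sub_right]
        rw [expand]
        linarith
      have hzero : (μ i - μt i) - (μ i0 - μt i0) = 0 := by
        have hself : inner ℝ ((μ i - μt i) - (μ i0 - μt i0)) ((μ i - μt i) - (μ i0 - μt i0))
            = (0 : ℝ) := hv ((μ i - μt i) - (μ i0 - μt i0))
        exact inner_self_eq_zero.mp hself
      have heq : μ i - μt i = μ i0 - μt i0 := sub_eq_zero.mp hzero
      rw [← heq]
      abel
  · rintro ⟨v, hv, C, hC⟩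
    intro x i
    have hnorm : ∀ j : Fin k, ‖x - μt j‖ ^ 2 = ‖x - μ j‖ ^ 2 + 2 * inner ℝ x v - C := by
      intro j
      have e1 : ‖x - μt j‖ ^ 2 = ‖x‖ ^ 2 - 2 * inner ℝ x (μt j) + ‖μt j‖ ^ 2 :=
        norm_sub_sq_real x (μt j)
      have e2 : ‖x - μ j‖ ^ 2 = ‖x‖ ^ 2 - 2 * inner ℝ x (μ j) + ‖μ j‖ ^ 2 :=
        norm_sub_sq_real x (μ j)
      have e3 : inner ℝ x (μt j) = (inner ℝ x (μ j) : ℝ) - inner ℝ x v := by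
        rw [hv j, inner_sub_right]
      have e4 := hC j
      linarith
    have hexp : ∀ j : Fin k, Real.exp (-‖x - μt j‖ ^ 2 / 2)
        = Real.exp (-(inner ℝ x v) + C / 2) * Real.exp (-‖x - μ j‖ ^ 2 / 2) := by
      intro j
      rw [← Real.exp_add, hnorm j]
      ring_nf
    rw [hexp i]
    have hsum : (∑ j, Real.exp (-‖x - μt j‖ ^ 2 / 2))
        = Real.exp (-(inner ℝ x v) + C / 2) * ∑ j, Real.exp (-‖x - μ j‖ ^ 2 / 2) := by
      rw [Finset.mul_sum]
      exact Finset.sum_congr rfl fun j _ => hexp j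
    rw [hsum, mul_div_mul_left _ _ (Real.exp_ne_zero _)]
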